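/- Let T:[0,1]^d→[0,1]^d be a piecewise expanding map, μ an exponentially mixing T-invariant Borel probability measure absolutely continuous with respect to m_d whose density h belongs to L^q(m_d) for some q>1, and f:[0,1]^d→[0,1]^d Lipschitz with constant p > 0 for the maximum norm. Let {r_n}_{n≥1} be a sequence in (ℝ_{≥0})^d with lim_{n→∞}|r_n| = 0 such that each nonzero r_n satisfies r_{n,i} > n^{−2} for all i, and let Ê_n be the associated sets (for admissible functions l_n as in the context). Then for every ball B ⊆ [0,1]^d there exists N such that for all n ≥ N: (1/2)·μ(B)·r_{n,1}⋯r_{n,d} ≤ μ(B ∩ Ê_n) ≤ 2·μ(B)·r_{n,1}⋯r_{n,d}. -/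

import Mathlib

open MeasureTheory Filter Set Metric
open scoped ENNReal NNReal Topology BigOperators

noncomputable section

set_option maxHeartbeats 1000000

/-- The closed unit cube `[0,1]^d` in `ℝ^d` with the maximum norm. -/
def unitCube (d : ℕ) : Set (Fin d → ℝ) := Set.Icc 0 1

/-- The half-open unit cube `[0,1)^d`. -/
def unitCubeIco (d : ℕ) : Set (Fin d → ℝ) := Set.univ.pi fun _ => Set.Ico (0:ℝ) 1

/-- The `(d-1)`-dimensional upper Minkowski content
`M^{*(d-1)}(A) = limsup_{ε→0⁺} m_d(A(ε))/ε`. -/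
def upperMinkContent (d : ℕ) (A : Set (Fin d → ℝ)) : ℝ≥0∞ :=
  Filter.limsup (fun ε : ℝ => volume (Metric.thickening ε A) / ENNReal.ofReal ε)
    (nhdsWithin 0 (Set.Ioi 0))

/-- Piecewise expanding map on `[0,1]^d`, with explicit expansion constant `L` and
boundary Minkowski-content constant `K`. -/
def IsPiecewiseExpandingWith (d : ℕ) (T : (Fin d → ℝ) → (Fin d → ℝ)) (L K : ℝ) : Prop :=
  Set.MapsTo T (unitCube d) (unitCube d) ∧ 1 < L ∧ 0 < K ∧
  ∃ (Q : ℕ) (U : Fin Q → Set (Fin d → ℝ)),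
    (∀ i, (U i).Nonempty) ∧ (∀ i, IsOpen (U i)) ∧ (∀ i, IsConnected (U i)) ∧
    (∀ i, U i ⊆ unitCube d) ∧
    (Pairwise fun i j => Disjoint (U i) (U j)) ∧
    (⋃ i, closure (U i)) = unitCube d ∧
    Set.InjOn T (⋃ i, U i) ∧
    (∀ i, ∃ g : (Fin d → ℝ) → (Fin d → ℝ),
        ContDiffOn ℝ 1 g (closure (U i)) ∧ Set.EqOn g T (U i)) ∧
    (∀ i, ∀ x ∈ U i, L ≤ ‖fderiv ℝ T x‖) ∧
    (∀ i, upperMinkContent d (frontier (U i)) ≤ ENNReal.ofReal K)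

/-- Piecewise expanding map on `[0,1]^d`. -/
def IsPiecewiseExpanding (d : ℕ) (T : (Fin d → ℝ) → (Fin d → ℝ)) : Prop :=
  ∃ L K : ℝ, IsPiecewiseExpandingWith d T L K

/-- `μ` is exponentially mixing for `T` on the class of Borel sets whose boundaries have
bounded `(d-1)`-dimensional upper Minkowski content. -/
def ExpMixing (d : ℕ) (T : (Fin d → ℝ) → (Fin d → ℝ)) (μ : Measure (Fin d → ℝ)) : Prop :=
  ∀ C₀ : ℝ, 0 < C₀ → ∃ c : ℝ, 0 < c ∧ ∃ τ : ℝ, 0 < τ ∧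
    ∀ n : ℕ, 1 ≤ n → ∀ F G : Set (Fin d → ℝ), MeasurableSet F → MeasurableSet G →
      upperMinkContent d (frontier F) ≤ ENNReal.ofReal C₀ →
      upperMinkContent d (frontier G) ≤ ENNReal.ofReal C₀ →
      |(μ (F ∩ T^[n] ⁻¹' G)).toReal - (μ F).toReal * (μ G).toReal| ≤
        (μ G).toReal * (c * Real.exp (-τ * n))

/-- `f` is a piecewise Lipschitz vector function on `S` (w.r.t. `μ`), with constant `p`. -/
def PiecewiseLipschitz (d : ℕ) (S : Set (Fin d → ℝ)) (μ : Measure (Fin d → ℝ))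
    (f : (Fin d → ℝ) → (Fin d → ℝ)) : Prop :=
  ∃ p : ℝ, 0 < p ∧ ∃ (m : ℕ) (U : Fin m → Set (Fin d → ℝ)),
    (∀ j, MeasurableSet (U j)) ∧ μ (S \ ⋃ j, U j) = 0 ∧
    ∀ j, ∀ x ∈ U j, ∀ y ∈ U j, ‖f x - f y‖ ≤ p * ‖x - y‖

/-- Coordinate-parallel hyperrectangle `R(y,r) = ∏_i [y_i - r_i, y_i + r_i]`. -/
def hyperRect {d : ℕ} (y r : Fin d → ℝ) : Set (Fin d → ℝ) := Set.Icc (y - r) (y + r)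

/-- The twisted recurrence set `R^f({r_n})` with hyperrectangle targets. -/
def twistedRect (d : ℕ) (S : Set (Fin d → ℝ)) (T f : (Fin d → ℝ) → (Fin d → ℝ))
    (r : ℕ → Fin d → ℝ) : Set (Fin d → ℝ) :=
  {x ∈ S | ∃ᶠ n in Filter.atTop, T^[n] x ∈ hyperRect (f x) (r n)}

/-- The hyperboloid `H(y,δ) = y + {z ∈ [-1,1]^d : |z₁⋯z_d| < δ}`. -/
def hyperboloid (d : ℕ) (y : Fin d → ℝ) (δ : ℝ) : Set (Fin d → ℝ) :=
  {x | (∀ i, |x i - y i| ≤ 1) ∧ |∏ i, (x i - y i)| < δ}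

/-- The twisted recurrence set `R^{f×}({δ_n})` with hyperboloid targets. -/
def twistedHyp (d : ℕ) (S : Set (Fin d → ℝ)) (T f : (Fin d → ℝ) → (Fin d → ℝ))
    (δ : ℕ → ℝ) : Set (Fin d → ℝ) :=
  {x ∈ S | ∃ᶠ n in Filter.atTop, T^[n] x ∈ hyperboloid d (f x) (δ n)}

/-- The auxiliary set `Ê_n` built from admissible dilation functions `l_n`
(`Ê_n = ∅` when `r_n = 0`). -/
def Ehat (d : ℕ) (T f : (Fin d → ℝ) → (Fin d → ℝ)) (r : ℕ → Fin d → ℝ)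
    (l : ℕ → (Fin d → ℝ) → ℝ) (n : ℕ) : Set (Fin d → ℝ) :=
  if r n = 0 then ∅ else {x ∈ unitCube d | T^[n] x ∈ hyperRect (f x) (l n x • r n)}

/-- product difference bound -/
lemma prod_sub_prod_le' {ι : Type*} (s : Finset ι) (x y : ι → ℝ) (M : ℝ)
    (hx0 : ∀ i ∈ s, 0 ≤ x i) (hxy : ∀ i ∈ s, x i ≤ y i) (hyM : ∀ i ∈ s, y i ≤ M) :
    ∏ i ∈ s, y i - ∏ i ∈ s, x i ≤ (max 1 M) ^ s.card * ∑ i ∈ s, (y i - x i) := by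
  classical
  set M' := max 1 M with hM'
  have hM1 : (1:ℝ) ≤ M' := le_max_left _ _
  have hM0 : (0:ℝ) ≤ M' := le_trans zero_le_one hM1
  induction s using Finset.induction_on with
  | empty => simp
  | @insert a s ha ih =>
    have hx0' : ∀ i ∈ s, 0 ≤ x i := fun i hi => hx0 i (Finset.mem_insert_of_mem hi)
    have hxy' : ∀ i ∈ s, x i ≤ y i := fun i hi => hxy i (Finset.mem_insert_of_mem hi)
    have hyM' : ∀ i ∈ s, y i ≤ M := fun i hi => hyM i (Finset.mem_insert_of_mem hi)
    have ha0 : 0 ≤ x a := hx0 a (Finset.mem_insert_self a s)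
    have haxy : x a ≤ y a := hxy a (Finset.mem_insert_self a s)
    have haM : y a ≤ M' := le_trans (hyM a (Finset.mem_insert_self a s)) (le_max_right _ _)
    have hprodx : ∏ i ∈ s, x i ≤ M' ^ s.card := by
      calc ∏ i ∈ s, x i ≤ ∏ i ∈ s, M' := by
            apply Finset.prod_le_prod hx0'
            intro i hi
            exact le_trans (hxy' i hi) (le_trans (hyM' i hi) (le_max_right _ _))
        _ = M' ^ s.card := by rw [Finset.prod_const]
    have hsum0 : 0 ≤ ∑ i ∈ s, (y i - x i) :=
      Finset.sum_nonneg fun i hi => sub_nonneg.2 (hxy' i hi)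
    have hD0 : 0 ≤ ∏ i ∈ s, y i - ∏ i ∈ s, x i :=
      sub_nonneg.2 (Finset.prod_le_prod hx0' hxy')
    have hd := ih hx0' hxy' hyM'
    rw [Finset.prod_insert ha, Finset.prod_insert ha, Finset.sum_insert ha,
      Finset.card_insert_of_notMem ha]
    have hy0 : 0 ≤ y a := le_trans ha0 haxy
    have h1 : y a * (∏ i ∈ s, y i - ∏ i ∈ s, x i) ≤ M' * (M' ^ s.card * ∑ i ∈ s, (y i - x i)) :=
      mul_le_mul haM hd hD0 hM0
    have h2 : (y a - x a) * ∏ i ∈ s, x i ≤ (y a - x a) * M' ^ s.card :=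
      mul_le_mul_of_nonneg_left hprodx (sub_nonneg.2 haxy)
    have hpow0 : (0:ℝ) ≤ M' ^ s.card := pow_nonneg hM0 _
    have key : y a * ∏ i ∈ s, y i - x a * ∏ i ∈ s, x i
        = y a * (∏ i ∈ s, y i - ∏ i ∈ s, x i) + (y a - x a) * ∏ i ∈ s, x i := by ring
    rw [key, pow_succ]
    have hA : (y a - x a) * ∏ i ∈ s, x i ≤ (y a - x a) * (M' ^ s.card * M') :=
      le_trans h2 (mul_le_mul_of_nonneg_left (le_mul_of_one_le_right hpow0 hM1) (sub_nonneg.2 haxy))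
    linarith

lemma ofReal_max (a : ℝ) : ENNReal.ofReal a = ENNReal.ofReal (max a 0) := by
  rcases le_total a 0 with h | h
  · rw [ENNReal.ofReal_eq_zero.2 h, max_eq_right h, ENNReal.ofReal_zero]
  · rw [max_eq_left h]

lemma boxFrontier_content {d : ℕ} (lo hi : Fin d → ℝ) (hside : ∀ i, hi i - lo i ≤ 1)
    (S : Set (Fin d → ℝ)) (hS1 : S ⊆ Set.Icc lo hi)
    (hS2 : (Set.univ.pi fun i => Set.Ioo (lo i) (hi i)) ⊆ S) :
    upperMinkContent d (frontier S) ≤ ENNReal.ofReal (3 ^ d * (4 * d)) := by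
  apply Filter.limsup_le_of_le
  · isBoundedDefault
  filter_upwards [Ioo_mem_nhdsGT_of_mem (show (0:ℝ) ∈ Set.Ico (0:ℝ) 1 by constructor <;> norm_num)]
    with ε hε
  obtain ⟨hε0, hε1⟩ := hε
  have hfr_sub : frontier S ⊆ Set.Icc lo hi := by
    have := frontier_subset_closure (s := S)
    calc frontier S ⊆ closure S := frontier_subset_closure
      _ ⊆ Set.Icc lo hi := closure_minimal hS1 isClosed_Icc
  have hthick : Metric.thickening ε (frontier S) ⊆
      Set.Icc (fun i => lo i - ε) (fun i => hi i + ε) \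
        (Set.univ.pi fun i => Set.Ioo (lo i + ε) (hi i - ε)) := by
    intro z hz
    rw [Metric.mem_thickening_iff] at hz
    obtain ⟨w, hw, hd⟩ := hz
    have hwIcc := hfr_sub hw
    have hcoord : ∀ i, |z i - w i| < ε := by
      intro i
      have := dist_le_pi_dist z w i
      rw [Real.dist_eq] at this
      exact lt_of_le_of_lt this hd
    constructor
    · refine ⟨fun i => ?_, fun i => ?_⟩
      · have h1 := (hwIcc.1 i)
        have h2 := abs_lt.1 (hcoord i)
        show lo i - ε ≤ z i
        linarith [h2.1, h2.2]
      · have h1 := (hwIcc.2 i)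
        have h2 := abs_lt.1 (hcoord i)
        show z i ≤ hi i + ε
        linarith [h2.1, h2.2]
    · intro hzin
      have hwin : w ∈ Set.univ.pi fun i => Set.Ioo (lo i) (hi i) := by
        intro i _
        have h1 := hzin i (Set.mem_univ i)
        have h2 := abs_lt.1 (hcoord i)
        constructor <;> [skip; skip] <;> simp only [Set.mem_Ioo] at h1 <;> linarith [h1.1, h1.2]
      have hopen : IsOpen (Set.univ.pi fun i => Set.Ioo (lo i) (hi i)) :=
        isOpen_set_pi Set.finite_univ fun i _ => isOpen_Ioo
      have : w ∈ interior S := interior_maximal hS2 hopen hwin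
      rw [← closure_diff_interior] at hw
      exact hw.2 this
  have hYsub : (Set.univ.pi fun i => Set.Ioo (lo i + ε) (hi i - ε)) ⊆
      Set.Icc (fun i => lo i - ε) (fun i => hi i + ε) := by
    intro z hz
    refine ⟨fun i => ?_, fun i => ?_⟩ <;> have hzi := hz i (Set.mem_univ i) <;>
      simp only [Set.mem_Ioo] at hzi
    · show lo i - ε ≤ z i
      linarith [hzi.1]
    · show z i ≤ hi i + ε
      linarith [hzi.2]
  have hvol : volume (Metric.thickening ε (frontier S)) ≤
      ENNReal.ofReal (3 ^ d * (4 * d) * ε) := by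
    refine le_trans (measure_mono hthick) ?_
    have hdiff : volume (Set.Icc (fun i => lo i - ε) (fun i => hi i + ε) \
        (Set.univ.pi fun i => Set.Ioo (lo i + ε) (hi i - ε)))
        = volume (Set.Icc (fun i => lo i - ε) (fun i => hi i + ε)) -
          volume (Set.univ.pi fun i => Set.Ioo (lo i + ε) (hi i - ε)) := by
      apply measure_diff hYsub
      · exact (MeasurableSet.univ_pi fun i => measurableSet_Ioo).nullMeasurableSet
      · exact ne_of_lt (lt_of_le_of_lt (measure_mono hYsub) (by
          rw [Real.volume_Icc_pi]; exact ENNReal.prod_lt_top fun i _ => ENNReal.ofReal_lt_top))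
    rw [hdiff, Real.volume_Icc_pi, Real.volume_pi_Ioo]
    set X : Fin d → ℝ := fun i => max (hi i - ε - (lo i + ε)) 0 with hX
    set Y : Fin d → ℝ := fun i => max (hi i + ε - (lo i - ε)) 0 with hY
    have hXr : ∀ i, ENNReal.ofReal (hi i - ε - (lo i + ε)) = ENNReal.ofReal (X i) :=
      fun i => ofReal_max _
    have hYr : ∀ i, ENNReal.ofReal (hi i + ε - (lo i - ε)) = ENNReal.ofReal (Y i) :=
      fun i => ofReal_max _
    calc (∏ i, ENNReal.ofReal (hi i + ε - (lo i - ε))) -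
          ∏ i, ENNReal.ofReal (hi i - ε - (lo i + ε))
        = ENNReal.ofReal (∏ i, Y i) - ENNReal.ofReal (∏ i, X i) := by
          rw [ENNReal.ofReal_prod_of_nonneg fun i _ => le_max_right _ _,
            ENNReal.ofReal_prod_of_nonneg fun i _ => le_max_right _ _]
          simp_rw [hXr, hYr]
          rfl
      _ = ENNReal.ofReal (∏ i, Y i - ∏ i, X i) := by
          rw [ENNReal.ofReal_sub _ (Finset.prod_nonneg fun i _ => le_max_right _ _)]
      _ ≤ ENNReal.ofReal (3 ^ d * (4 * d) * ε) := by
          apply ENNReal.ofReal_le_ofReal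
          have hb := prod_sub_prod_le' Finset.univ X Y 3
            (fun i _ => le_max_right _ _)
            (fun i _ => max_le_max (by linarith) le_rfl)
            (fun i _ => max_le (by linarith [hside i]) (by norm_num))
          have h3 : (max (1:ℝ) 3) = 3 := by norm_num
          rw [h3] at hb
          have hsum : ∑ i : Fin d, (Y i - X i) ≤ ∑ i : Fin d, 4 * ε := by
            apply Finset.sum_le_sum
            intro i _
            have : Y i ≤ X i + 4 * ε := by
              apply max_le
              · linarith [le_max_left (hi i - ε - (lo i + ε)) (0:ℝ)]
              · linarith [le_max_right (hi i - ε - (lo i + ε)) (0:ℝ)]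
            linarith
          simp only [Finset.sum_const, Finset.card_univ, Fintype.card_fin, nsmul_eq_mul] at hsum
          have hcard : (Finset.univ : Finset (Fin d)).card = d := by simp
          rw [hcard] at hb
          calc ∏ i, Y i - ∏ i, X i ≤ 3 ^ d * ∑ i : Fin d, (Y i - X i) := hb
            _ ≤ 3 ^ d * (d * (4 * ε)) := by
                apply mul_le_mul_of_nonneg_left _ (by positivity)
                linarith
            _ = 3 ^ d * (4 * d) * ε := by ring
  rw [ENNReal.div_le_iff (ne_of_gt (ENNReal.ofReal_pos.2 hε0)) ENNReal.ofReal_ne_top]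
  calc volume (Metric.thickening ε (frontier S)) ≤ ENNReal.ofReal (3 ^ d * (4 * d) * ε) := hvol
    _ = ENNReal.ofReal (3 ^ d * (4 * d)) * ENNReal.ofReal ε := by
        exact ENNReal.ofReal_mul (by positivity)

lemma holder_bound {d : ℕ} (h : (Fin d → ℝ) → ℝ) (hh0 : ∀ x, 0 ≤ h x)
    (q : ℝ) (hq : 1 < q) (hLq : MemLp h (ENNReal.ofReal q) volume)
    {A : Set (Fin d → ℝ)} (hA : MeasurableSet A) :
    ∫⁻ x in A, ENNReal.ofReal (h x) ∂(volume : Measure (Fin d → ℝ)) ≤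
      eLpNorm h (ENNReal.ofReal q) volume * (volume A) ^ (1 - 1/q) := by
  have hq0 : (0:ℝ) < q := lt_trans zero_lt_one hq
  have hconj : q.HolderConjugate q.conjExponent := Real.HolderConjugate.conjExponent hq
  set q' := q.conjExponent with hq'def
  have hq'0 : 0 < q' := hconj.symm.pos
  have hiq : 1/q' = 1 - 1/q := by
    have h2 := hconj.inv_add_inv_eq_one
    rw [one_div, one_div]
    linarith
  have hind : (fun x => ENNReal.ofReal (h x) * A.indicator (fun _ => (1:ℝ≥0∞)) x)
      = A.indicator (fun x => ENNReal.ofReal (h x)) := by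
    funext x
    by_cases hx : x ∈ A
    · simp [Set.indicator_of_mem hx]
    · simp [Set.indicator_of_notMem hx]
  have hmf : AEMeasurable (fun x => ENNReal.ofReal (h x)) (volume : Measure (Fin d → ℝ)) :=
    ENNReal.measurable_ofReal.comp_aemeasurable hLq.1.aemeasurable
  have hmg : AEMeasurable (A.indicator (fun _ => (1:ℝ≥0∞)))
      (volume : Measure (Fin d → ℝ)) :=
    ((measurable_const (a := (1:ℝ≥0∞))).indicator hA).aemeasurable
  have hH := ENNReal.lintegral_mul_le_Lp_mul_Lq (volume : Measure (Fin d → ℝ)) hconj hmf hmg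
  rw [← lintegral_indicator hA, ← hind]
  refine le_trans hH ?_
  have e1 : (∫⁻ a, ENNReal.ofReal (h a) ^ q ∂volume) ^ (1/q)
      = eLpNorm h (ENNReal.ofReal q) volume := by
    rw [eLpNorm_eq_lintegral_rpow_enorm_toReal (by simp [ENNReal.ofReal_eq_zero]; linarith)
      ENNReal.ofReal_ne_top]
    rw [ENNReal.toReal_ofReal hq0.le]
    congr 1
    refine lintegral_congr fun x => ?_
    rw [Real.enorm_eq_ofReal (hh0 x)]
  have e2 : (∫⁻ a, (A.indicator (fun _ => (1:ℝ≥0∞)) a) ^ q' ∂volume) ^ (1/q')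
      = (volume A) ^ (1 - 1/q) := by
    have : (fun a => (A.indicator (fun _ => (1:ℝ≥0∞)) a) ^ q')
        = A.indicator (fun _ => (1:ℝ≥0∞)) := by
      funext x
      by_cases hx : x ∈ A
      · simp [Set.indicator_of_mem hx]
      · simp [Set.indicator_of_notMem hx, ENNReal.zero_rpow_of_pos hq'0]
    rw [this, show (A.indicator (fun _ => (1:ℝ≥0∞))) = A.indicator 1 from rfl,
      lintegral_indicator_one hA, hiq]
  rw [e1, e2]



set_option maxHeartbeats 1000000 in
lemma key_estimate {d : ℕ} (hd : 0 < d)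
    (T f : (Fin d → ℝ) → (Fin d → ℝ)) (μ : Measure (Fin d → ℝ))
    [IsProbabilityMeasure μ] (hμcube : μ (unitCube d) = 1)
    (hmeasT : Measurable T) (hTmaps : Set.MapsTo T (unitCube d) (unitCube d))
    (h : (Fin d → ℝ) → ℝ) (hh0 : ∀ x, 0 ≤ h x)
    (hdens : μ = volume.withDensity fun x => ENNReal.ofReal (h x))
    (q : ℝ) (hq : 1 < q) (hLq : MemLp h (ENNReal.ofReal q) volume)
    (p : ℝ) (hp : 0 < p) (hfl : ∀ x y, ‖f x - f y‖ ≤ p * ‖x - y‖)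
    (hfmaps : Set.MapsTo f (unitCube d) (unitCube d))
    (r : Fin d → ℝ) (hr0 : ∀ i, 0 ≤ r i) (hr1 : ∀ i, r i ≤ 1)
    (W : ℝ) (hW1 : 1 ≤ W) (hrW : ∀ i, W⁻¹ ≤ r i)
    (ll : (Fin d → ℝ) → ℝ) (hl0 : ∀ x, 0 ≤ ll x)
    (hleq : ∀ x, (μ (hyperRect (f x) (ll x • r))).toReal = ∏ i, r i)
    (hllt : ∀ x, ∀ s : ℝ, 0 ≤ s → s < ll x →
        (μ (hyperRect (f x) (s • r))).toReal < ∏ i, r i)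
    (hlgt : ∀ x, ∀ s : ℝ, ll x < s → (∏ i, r i) < (μ (hyperRect (f x) (s • r))).toReal)
    (n : ℕ)
    (E : ℝ) (hE : 0 ≤ E)
    (hmixn : ∀ F G : Set (Fin d → ℝ), MeasurableSet F → MeasurableSet G →
      upperMinkContent d (frontier F) ≤ ENNReal.ofReal ((3:ℝ) ^ d * (4 * d)) →
      upperMinkContent d (frontier G) ≤ ENNReal.ofReal ((3:ℝ) ^ d * (4 * d)) →
      |(μ (F ∩ T^[n] ⁻¹' G)).toReal - (μ F).toReal * (μ G).toReal| ≤
        (μ G).toReal * E)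
    (x₀ : Fin d → ℝ) (ρ : ℝ) (hρ : 0 < ρ)
    (hB : Metric.closedBall x₀ ρ ⊆ unitCube d)
    (δ : ℝ) (hδ0 : 0 < δ) (hδ1 : δ ≤ 1)
    (K : ℕ) (hK : 2 * ρ / δ < K)
    (hηc : (eLpNorm h (ENNReal.ofReal q) volume).toReal *
        ((2 * (1 + 2 * p) * W) ^ d * (4 * p * d * (δ * W))) ^ (1 - 1/q) ≤ (∏ i, r i) / 4)
    (hKE : (K:ℝ) ^ d * E ≤ (∏ i, r i) * (μ (Metric.closedBall x₀ ρ)).toReal / 4) :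
    (1 / 2) * (μ (Metric.closedBall x₀ ρ)).toReal * ∏ i, r i
        ≤ (μ (Metric.closedBall x₀ ρ ∩
            {x ∈ unitCube d | T^[n] x ∈ hyperRect (f x) (ll x • r)})).toReal ∧
    (μ (Metric.closedBall x₀ ρ ∩
            {x ∈ unitCube d | T^[n] x ∈ hyperRect (f x) (ll x • r)})).toReal
        ≤ 2 * (μ (Metric.closedBall x₀ ρ)).toReal * ∏ i, r i := by
  classical
  set B := Metric.closedBall x₀ ρ with hBdef
  set Eh := {x ∈ unitCube d | T^[n] x ∈ hyperRect (f x) (ll x • r)} with hEhdef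
  set c := ∏ i, r i with hcdef
  set Hr := (eLpNorm h (ENNReal.ofReal q) volume).toReal with hHrdef
  have hq0 : (0:ℝ) < q := lt_trans zero_lt_one hq
  have hexp0 : 0 < 1 - 1/q := by
    have : 1/q < 1 := by
      rw [div_lt_one hq0]; exact hq
    linarith
  have hμtop : ∀ s : Set (Fin d → ℝ), μ s ≠ ⊤ := fun s => measure_ne_top μ s
  have hμ1 : ∀ s : Set (Fin d → ℝ), (μ s).toReal ≤ 1 := by
    intro s
    have h1 : μ s ≤ 1 := prob_le_one
    have := ENNReal.toReal_mono (by simp) h1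
    simpa using this
  have hW0 : (0:ℝ) < W := lt_of_lt_of_le zero_lt_one hW1
  have hrpos : ∀ i, 0 < r i := fun i => lt_of_lt_of_le (inv_pos.2 hW0) (hrW i)
  have hc0 : 0 < c := Finset.prod_pos fun i _ => hrpos i
  have hc1 : c ≤ 1 := by
    have h2 := hlgt x₀ (ll x₀ + 1) (by linarith [hl0 x₀])
    have h3 := hμ1 (hyperRect (f x₀) ((ll x₀ + 1) • r))
    linarith
  have hpδW : 0 < 2*p*δ*W := mul_pos (mul_pos (mul_pos two_pos hp) hδ0) hW0
  have hδW : 2*p*δ*W ≤ 2*p*W := by nlinarith [mul_nonneg (mul_nonneg hp.le hW0.le) (sub_nonneg.2 hδ1)]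
  set η := Hr * ((2 * (1 + 2 * p) * W) ^ d * (4 * p * d * (δ * W))) ^ (1 - 1/q) with hηdef
  have hη0 : 0 ≤ η := mul_nonneg ENNReal.toReal_nonneg (Real.rpow_nonneg (by positivity) _)
  have hηc4 : η ≤ c / 4 := hηc
  -- the ball is a box
  have hBbox : B = Set.Icc (fun i => x₀ i - ρ) (fun i => x₀ i + ρ) := by
    rw [hBdef, closedBall_pi _ hρ.le, ← Set.pi_univ_Icc]
    refine Set.pi_congr rfl fun i _ => ?_
    exact Real.closedBall_eq_Icc
  have hBmeas : MeasurableSet B := measurableSet_closedBall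
  have hρ2 : 2 * ρ ≤ 1 := by
    have hm : ∀ t : ℝ, |t| ≤ ρ → (fun i => x₀ i + t) ∈ B := by
      intro t ht
      rw [hBdef, Metric.mem_closedBall, dist_pi_le_iff hρ.le]
      intro i
      rw [Real.dist_eq]
      simpa using ht
    set i0 : Fin d := ⟨0, hd⟩
    have h1 := hB (hm ρ (by rw [abs_of_nonneg hρ.le]))
    have h2 := hB (hm (-ρ) (by rw [abs_neg, abs_of_nonneg hρ.le]))
    have h3 : x₀ i0 + ρ ≤ 1 := h1.2 i0
    have h4 : (0:ℝ) ≤ x₀ i0 + -ρ := h2.1 i0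
    linarith
  -- cube facts
  have hcube_meas : MeasurableSet (unitCube d) := measurableSet_Icc
  have hcubec : μ (unitCube d)ᶜ = 0 := by
    have h1 := measure_compl hcube_meas (hμtop _)
    rw [hμcube, measure_univ] at h1
    simpa using h1
  have hμinter_cube : ∀ A : Set (Fin d → ℝ), μ (A ∩ unitCube d) = μ A := by
    intro A
    refine le_antisymm (measure_mono Set.inter_subset_left) ?_
    calc μ A ≤ μ (A ∩ unitCube d) + μ (A \ unitCube d) := measure_le_inter_add_diff μ A _
      _ ≤ μ (A ∩ unitCube d) + μ (unitCube d)ᶜ := by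
          gcongr
          exact fun x hx => hx.2
      _ = μ (A ∩ unitCube d) := by rw [hcubec, add_zero]
  -- Hoelder consequence
  have hμA : ∀ A : Set (Fin d → ℝ), MeasurableSet A → ∀ v : ℝ, 0 ≤ v →
      volume A ≤ ENNReal.ofReal v → (μ A).toReal ≤ Hr * v ^ (1 - 1/q) := by
    intro A hA v hv hvol
    have h1 : μ A ≤ eLpNorm h (ENNReal.ofReal q) volume * (volume A) ^ (1 - 1/q) := by
      rw [hdens, withDensity_apply _ hA]
      exact holder_bound h hh0 q hq hLq hA
    have h2 : (volume A) ^ (1 - 1/q) ≤ (ENNReal.ofReal v) ^ (1 - 1/q) :=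
      ENNReal.rpow_le_rpow hvol (le_of_lt hexp0)
    have h3 : μ A ≤ eLpNorm h (ENNReal.ofReal q) volume * (ENNReal.ofReal v) ^ (1 - 1/q) :=
      le_trans h1 (mul_le_mul_right h2 _)
    have hfin : eLpNorm h (ENNReal.ofReal q) volume * (ENNReal.ofReal v) ^ (1 - 1/q) ≠ ⊤ :=
      ENNReal.mul_ne_top hLq.2.ne
        (ENNReal.rpow_ne_top_of_nonneg (le_of_lt hexp0) ENNReal.ofReal_ne_top)
    have h4 := ENNReal.toReal_mono hfin h3
    rw [ENNReal.toReal_mul, ← ENNReal.toReal_rpow, ENNReal.toReal_ofReal hv] at h4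
    exact h4
  -- rectangle membership
  have hrect_mem : ∀ (y w : Fin d → ℝ) (s : ℝ),
      w ∈ hyperRect y (s • r) ↔ ∀ i, |w i - y i| ≤ s * r i := by
    intro y w s
    constructor
    · rintro ⟨h1, h2⟩ i
      have h1i : y i - (s • r) i ≤ w i := h1 i
      have h2i : w i ≤ y i + (s • r) i := h2 i
      simp only [Pi.smul_apply, smul_eq_mul] at h1i h2i
      rw [abs_le]
      constructor <;> [skip; skip] <;> [linarith; linarith]
    · intro hw
      constructor <;> intro i <;> have := abs_le.1 (hw i)
      · show y i - (s • r) i ≤ w i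
        simp only [Pi.smul_apply, smul_eq_mul]
        linarith [this.1]
      · show w i ≤ y i + (s • r) i
        simp only [Pi.smul_apply, smul_eq_mul]
        linarith [this.2]
  have hrect_meas : ∀ (y : Fin d → ℝ) (s : ℝ), MeasurableSet (hyperRect y (s • r)) :=
    fun y s => measurableSet_Icc
  have hshift : ∀ (y y' : Fin d → ℝ) (s s' : ℝ), (∀ i, |y i - y' i| ≤ (s' - s) * r i) →
      hyperRect y (s • r) ⊆ hyperRect y' (s' • r) := by
    intro y y' s s' hy w hw
    rw [hrect_mem] at hw ⊢
    intro i
    calc |w i - y' i| ≤ |w i - y i| + |y i - y' i| := abs_sub_le _ _ _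
      _ ≤ s * r i + (s' - s) * r i := add_le_add (hw i) (hy i)
      _ = s' * r i := by ring
  have hrmono : ∀ (y : Fin d → ℝ) (s s' : ℝ), s ≤ s' →
      hyperRect y (s • r) ⊆ hyperRect y (s' • r) := by
    intro y s s' hss'
    apply hshift
    intro i
    rw [sub_self, abs_zero]
    exact mul_nonneg (by linarith) (hr0 i)
  have hlle : ∀ x s, 0 ≤ s → c ≤ (μ (hyperRect (f x) (s • r))).toReal → ll x ≤ s := by
    intro x s hs hcs
    by_contra hcon
    push_neg at hcon
    exact absurd hcs (not_le.2 (hllt x s hs hcon))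
  have hlge : ∀ x s, (μ (hyperRect (f x) (s • r))).toReal ≤ c → s ≤ ll x := by
    intro x s hcs
    by_contra hcon
    push_neg at hcon
    exact absurd hcs (not_le.2 (hlgt x s hcon))
  have hllW : ∀ x : Fin d → ℝ, x ∈ unitCube d → ll x ≤ W := by
    intro x hx
    apply hlle x W (by linarith)
    have hfx := hfmaps hx
    have hsub : unitCube d ⊆ hyperRect (f x) (W • r) := by
      intro w hw
      rw [hrect_mem]
      intro i
      have h1 : (0:ℝ) ≤ w i := hw.1 i
      have h2 : w i ≤ 1 := hw.2 i
      have h3 : (0:ℝ) ≤ f x i := hfx.1 i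
      have h4 : f x i ≤ 1 := hfx.2 i
      calc |w i - f x i| ≤ 1 := by rw [abs_le]; constructor <;> linarith
        _ = W * W⁻¹ := (mul_inv_cancel₀ (ne_of_gt hW0)).symm
        _ ≤ W * r i := mul_le_mul_of_nonneg_left (hrW i) hW0.le
    have h1 : (1:ℝ≥0∞) ≤ μ (hyperRect (f x) (W • r)) := by
      rw [← hμcube]; exact measure_mono hsub
    have h2 := ENNReal.toReal_mono (hμtop _) h1
    simp only [ENNReal.toReal_one] at h2
    linarith
  -- shell estimate
  have hshell : ∀ (y : Fin d → ℝ) (s s' : ℝ), 0 ≤ s → s ≤ s' → s' - s ≤ 2*p*δ*W →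
      s' ≤ W + 2*p*δ*W →
      (μ (hyperRect y (s' • r))).toReal ≤ (μ (hyperRect y (s • r))).toReal + η := by
    intro y s s' hs hss' hgap hs'W
    have hsub : hyperRect y (s • r) ⊆ hyperRect y (s' • r) := hrmono y s s' hss'
    have hsplit : (μ (hyperRect y (s' • r))).toReal ≤ (μ (hyperRect y (s • r))).toReal +
        (μ (hyperRect y (s' • r) \ hyperRect y (s • r))).toReal := by
      have h1 : μ (hyperRect y (s' • r)) ≤ μ (hyperRect y (s • r)) +
          μ (hyperRect y (s' • r) \ hyperRect y (s • r)) := by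
        conv_lhs => rw [← Set.union_diff_cancel hsub]
        exact measure_union_le _ _
      have h2 := ENNReal.toReal_mono (by
        exact ENNReal.add_ne_top.2 ⟨hμtop _, hμtop _⟩) h1
      rwa [ENNReal.toReal_add (hμtop _) (hμtop _)] at h2
    have hvol : volume (hyperRect y (s' • r) \ hyperRect y (s • r)) ≤
        ENNReal.ofReal ((2 * (1 + 2 * p) * W) ^ d * (4 * p * d * (δ * W))) := by
      have hd1 : volume (hyperRect y (s' • r) \ hyperRect y (s • r)) =
          volume (hyperRect y (s' • r)) - volume (hyperRect y (s • r)) := by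
        apply measure_diff hsub (hrect_meas y s).nullMeasurableSet
        rw [hyperRect, Real.volume_Icc_pi]
        exact ne_of_lt (ENNReal.prod_lt_top fun i _ => ENNReal.ofReal_lt_top)
      rw [hd1, hyperRect, hyperRect, Real.volume_Icc_pi, Real.volume_Icc_pi]
      have hbi : ∀ i, (y + s' • r) i - (y - s' • r) i = 2 * s' * r i := by
        intro i
        simp only [Pi.add_apply, Pi.sub_apply, Pi.smul_apply, smul_eq_mul]
        ring
      have hbi' : ∀ i, (y + s • r) i - (y - s • r) i = 2 * s * r i := by
        intro i
        simp only [Pi.add_apply, Pi.sub_apply, Pi.smul_apply, smul_eq_mul]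
        ring
      simp only [hbi, hbi']
      have hX0 : ∀ i, (0:ℝ) ≤ 2 * s * r i := fun i => mul_nonneg (by linarith) (hr0 i)
      have hY0 : ∀ i, (0:ℝ) ≤ 2 * s' * r i := fun i => by
        have := (hrpos i).le; nlinarith
      rw [← ENNReal.ofReal_prod_of_nonneg (fun i _ => hY0 i),
        ← ENNReal.ofReal_prod_of_nonneg (fun i _ => hX0 i),
        ← ENNReal.ofReal_sub _ (Finset.prod_nonneg fun i _ => hX0 i)]
      apply ENNReal.ofReal_le_ofReal
      have hM1 : (1:ℝ) ≤ 2 * (1 + 2 * p) * W := by nlinarith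
      have hb := prod_sub_prod_le' Finset.univ (fun i => 2 * s * r i) (fun i => 2 * s' * r i)
        (2 * (1 + 2 * p) * W)
        (fun i _ => hX0 i)
        (fun i _ => by
          show 2 * s * r i ≤ 2 * s' * r i
          nlinarith [mul_nonneg (sub_nonneg.2 hss') (hr0 i)])
        (fun i _ => by
          show 2 * s' * r i ≤ 2 * (1 + 2 * p) * W
          have hs'0 : 0 ≤ s' := le_trans hs hss'
          have h3 : 2 * s' * r i ≤ 2 * s' := by
            nlinarith [mul_nonneg hs'0 (sub_nonneg.2 (hr1 i))]
          linarith)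
      rw [max_eq_right hM1] at hb
      have hcard : (Finset.univ : Finset (Fin d)).card = d := by simp
      rw [hcard] at hb
      refine le_trans hb ?_
      have hsum : ∑ i : Fin d, (2 * s' * r i - 2 * s * r i) ≤ (d:ℝ) * (4 * p * (δ * W)) := by
        have : ∀ i, 2 * s' * r i - 2 * s * r i ≤ 4 * p * (δ * W) := by
          intro i
          have h1 := hr1 i
          have h2 := (hrpos i).le
          nlinarith
        calc ∑ i : Fin d, (2 * s' * r i - 2 * s * r i) ≤ ∑ _i : Fin d, (4 * p * (δ * W)) :=
              Finset.sum_le_sum fun i _ => this i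
          _ = (d:ℝ) * (4 * p * (δ * W)) := by
              rw [Finset.sum_const, Finset.card_univ, Fintype.card_fin, nsmul_eq_mul]
      calc (2 * (1 + 2 * p) * W) ^ d * ∑ i : Fin d, (2 * s' * r i - 2 * s * r i)
          ≤ (2 * (1 + 2 * p) * W) ^ d * ((d:ℝ) * (4 * p * (δ * W))) := by
            apply mul_le_mul_of_nonneg_left hsum (by positivity)
        _ = (2 * (1 + 2 * p) * W) ^ d * (4 * p * d * (δ * W)) := by ring
    have hfinal := hμA _ ((hrect_meas y s').diff (hrect_meas y s)) _ (by positivity) hvol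
    rw [hηdef]
    linarith [hsplit, hfinal]
  -- singleton has measure zero
  have hsingle : ∀ y : Fin d → ℝ, (μ (hyperRect y ((0:ℝ) • r))).toReal = 0 := by
    intro y
    have h0 : hyperRect y ((0:ℝ) • r) = Set.Icc y y := by
      rw [hyperRect, zero_smul, sub_zero, add_zero]
    have hv : volume (hyperRect y ((0:ℝ) • r)) ≤ ENNReal.ofReal 0 := by
      have hz : ∏ i : Fin d, ENNReal.ofReal (y i - y i) = 0 :=
        Finset.prod_eq_zero (Finset.mem_univ (⟨0, hd⟩ : Fin d)) (by simp)
      rw [h0, Real.volume_Icc_pi, hz]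
      simp
    have h1 := hμA _ (hrect_meas y 0) 0 le_rfl hv
    rw [Real.zero_rpow (ne_of_gt hexp0), mul_zero] at h1
    exact le_antisymm h1 ENNReal.toReal_nonneg
  -- G set estimates
  have hGp_le : ∀ zz : Fin d → ℝ, zz ∈ unitCube d →
      (μ (hyperRect (f zz) ((ll zz + 2*p*δ*W) • r) ∩ unitCube d)).toReal ≤ c + η := by
    intro zz hzz
    have h1 : (μ (hyperRect (f zz) ((ll zz + 2*p*δ*W) • r) ∩ unitCube d)).toReal ≤
        (μ (hyperRect (f zz) ((ll zz + 2*p*δ*W) • r))).toReal :=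
      ENNReal.toReal_mono (hμtop _) (measure_mono Set.inter_subset_left)
    have h2 := hshell (f zz) (ll zz) (ll zz + 2*p*δ*W) (hl0 zz) (by linarith)
      (by linarith) (by have := hllW zz hzz; linarith)
    rw [hleq zz] at h2
    linarith
  have hGm_ge : ∀ zz : Fin d → ℝ, zz ∈ unitCube d →
      c - η ≤ (μ (hyperRect (f zz) ((ll zz - 2*p*δ*W) • r) ∩ unitCube d)).toReal := by
    intro zz hzz
    rw [hμinter_cube]
    by_cases hcase : 0 ≤ ll zz - 2*p*δ*W
    · have h2 := hshell (f zz) (ll zz - 2*p*δ*W) (ll zz) hcase (by linarith)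
        (by linarith) (by have := hllW zz hzz; linarith)
      rw [hleq zz] at h2
      linarith
    · push_neg at hcase
      have h2 := hshell (f zz) 0 (ll zz) le_rfl (hl0 zz) (by linarith)
        (by have := hllW zz hzz; linarith)
      rw [hleq zz, hsingle] at h2
      have h3 : (0:ℝ) ≤ (μ (hyperRect (f zz) ((ll zz - 2*p*δ*W) • r))).toReal :=
        ENNReal.toReal_nonneg
      linarith
  -- Minkowski content of G sets
  have hGcont : ∀ (y : Fin d → ℝ) (s : ℝ),
      upperMinkContent d (frontier (hyperRect y (s • r) ∩ unitCube d)) ≤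
        ENNReal.ofReal ((3:ℝ) ^ d * (4 * d)) := by
    intro y s
    have heq : hyperRect y (s • r) ∩ unitCube d =
        Set.Icc ((y - s • r) ⊔ 0) ((y + s • r) ⊓ 1) := by
      rw [hyperRect, unitCube, Set.Icc_inter_Icc]
    rw [heq]
    refine boxFrontier_content ((y - s • r) ⊔ 0) ((y + s • r) ⊓ 1) (fun i => ?_) _
      subset_rfl ?_
    · simp only [Pi.sup_apply, Pi.inf_apply, Pi.zero_apply, Pi.one_apply]
      have h1 : (0:ℝ) ≤ (y - s • r) i ⊔ 0 := le_sup_right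
      have h2 : (y + s • r) i ⊓ 1 ≤ 1 := inf_le_right
      linarith
    · rw [← Set.pi_univ_Icc]
      exact Set.pi_mono fun i _ => Set.Ioo_subset_Icc_self
  -- grid cells
  set a : Fin d → ℝ := fun i => x₀ i - ρ with hadef
  set cell : (Fin d → Fin K) → Set (Fin d → ℝ) := fun j =>
    Set.univ.pi fun i => Set.Ico (a i + δ * (j i : ℕ)) (a i + δ * ((j i : ℕ) + 1))
    with hcelldef
  have hcell_meas : ∀ j, MeasurableSet (cell j) :=
    fun j => MeasurableSet.univ_pi fun i => measurableSet_Ico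
  have hcell_mem : ∀ (x : Fin d → ℝ) (j : Fin d → Fin K), x ∈ cell j ↔
      ∀ i, a i + δ * (j i : ℕ) ≤ x i ∧ x i < a i + δ * ((j i : ℕ) + 1) := by
    intro x j
    constructor
    · intro hx i; exact hx i (Set.mem_univ i)
    · intro hx i _; exact hx i
  have hBcoord : ∀ x ∈ B, ∀ i, x₀ i - ρ ≤ x i ∧ x i ≤ x₀ i + ρ := by
    intro x hx i
    rw [hBbox] at hx
    exact ⟨hx.1 i, hx.2 i⟩
  have hfloorj : ∀ (x : Fin d → ℝ) (j : Fin d → Fin K), x ∈ cell j →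
      ∀ i, (j i : ℕ) = ⌊(x i - a i)/δ⌋₊ := by
    intro x j hxj i
    have h1 := (hcell_mem x j).1 hxj i
    have hj0 : (0:ℝ) ≤ δ * (j i : ℕ) := by positivity
    have hnn : 0 ≤ (x i - a i)/δ := div_nonneg (by linarith [h1.1]) hδ0.le
    symm
    rw [Nat.floor_eq_iff hnn]
    constructor
    · rw [le_div_iff₀ hδ0]
      nlinarith [h1.1]
    · rw [div_lt_iff₀ hδ0]
      nlinarith [h1.2]
  have hdisj_cell : ∀ j j' : Fin d → Fin K, j ≠ j' → Disjoint (cell j) (cell j') := by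
    intro j j' hne
    rw [Set.disjoint_left]
    intro x hxj hxj'
    apply hne
    funext i
    have e1 := hfloorj x j hxj i
    have e2 := hfloorj x j' hxj' i
    exact Fin.ext (e1.trans e2.symm)
  have hcover : ∀ x ∈ B, ∃ j : Fin d → Fin K, x ∈ cell j := by
    intro x hx
    have hnn : ∀ i, 0 ≤ (x i - a i)/δ := fun i =>
      div_nonneg (by have ha : a i = x₀ i - ρ := rfl; linarith [(hBcoord x hx i).1]) hδ0.le
    have hlt : ∀ i, ⌊(x i - a i)/δ⌋₊ < K := by
      intro i
      rw [Nat.floor_lt (hnn i)]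
      calc (x i - a i)/δ ≤ 2*ρ/δ := by
            apply (div_le_div_iff_of_pos_right hδ0).2
            have := (hBcoord x hx i).2
            have ha : a i = x₀ i - ρ := rfl
            linarith
        _ < K := hK
    refine ⟨fun i => ⟨⌊(x i - a i)/δ⌋₊, hlt i⟩, ?_⟩
    rw [hcell_mem]
    intro i
    constructor
    · have h1 := Nat.floor_le (hnn i)
      have h2 := (le_div_iff₀ hδ0).1 h1
      show a i + δ * ((⌊(x i - a i)/δ⌋₊ : ℕ) : ℝ) ≤ x i
      nlinarith [h2]
    · have h1 := Nat.lt_floor_add_one ((x i - a i)/δ)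
      have h2 := (div_lt_iff₀ hδ0).1 h1
      show x i < a i + δ * (((⌊(x i - a i)/δ⌋₊ : ℕ) : ℝ) + 1)
      nlinarith [h2]
  set J : Finset (Fin d → Fin K) := Finset.univ.filter (fun j => (B ∩ cell j).Nonempty)
    with hJdef
  set z : (Fin d → Fin K) → (Fin d → ℝ) := fun j =>
    if hne : (B ∩ cell j).Nonempty then hne.choose else x₀ with hzdef
  have hzmem : ∀ j ∈ J, z j ∈ B ∩ cell j := by
    intro j hj
    rw [hJdef, Finset.mem_filter] at hj
    rw [hzdef]
    simp only [dif_pos hj.2]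
    exact hj.2.choose_spec
  have hJmem : ∀ x ∈ B, ∃ j ∈ J, x ∈ cell j := by
    intro x hx
    obtain ⟨j, hj⟩ := hcover x hx
    refine ⟨j, ?_, hj⟩
    rw [hJdef]
    simp only [Finset.mem_filter, Finset.mem_univ, true_and]
    exact ⟨x, hx, hj⟩
  have hcardJ : (J.card : ℝ) ≤ (K:ℝ)^d := by
    have h1 : J.card ≤ Fintype.card (Fin d → Fin K) := Finset.card_le_univ J
    have h2 : Fintype.card (Fin d → Fin K) = K ^ d := by
      rw [Fintype.card_fun, Fintype.card_fin, Fintype.card_fin]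
    calc (J.card : ℝ) ≤ (Fintype.card (Fin d → Fin K) : ℝ) := by exact_mod_cast h1
      _ = (K:ℝ)^d := by rw [h2]; push_cast; ring
  -- f values on a cell are close
  have hfclose : ∀ (j : Fin d → Fin K), ∀ x ∈ cell j, ∀ x' ∈ cell j, ∀ i,
      |f x i - f x' i| ≤ p * δ := by
    intro j x hx x' hx' i
    have hnorm : ‖x - x'‖ ≤ δ := by
      rw [pi_norm_le_iff_of_nonneg hδ0.le]
      intro i'
      have h1 := (hcell_mem x j).1 hx i'
      have h2 := (hcell_mem x' j).1 hx' i'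
      show ‖(x - x') i'‖ ≤ δ
      rw [Pi.sub_apply, Real.norm_eq_abs, abs_le]
      constructor <;> nlinarith [h1.1, h1.2, h2.1, h2.2]
    calc |f x i - f x' i| = ‖(f x - f x') i‖ := by rw [Pi.sub_apply, Real.norm_eq_abs]
      _ ≤ ‖f x - f x'‖ := norm_le_pi_norm _ i
      _ ≤ p * ‖x - x'‖ := hfl x x'
      _ ≤ p * δ := mul_le_mul_of_nonneg_left hnorm hp.le
  -- content of F sets
  have hFcont : ∀ j : Fin d → Fin K, upperMinkContent d (frontier (B ∩ cell j)) ≤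
      ENNReal.ofReal ((3:ℝ)^d * (4*d)) := by
    intro j
    refine boxFrontier_content (fun i => max (x₀ i - ρ) (a i + δ * (j i : ℕ)))
      (fun i => min (x₀ i + ρ) (a i + δ * ((j i : ℕ) + 1))) (fun i => ?_) _ ?_ ?_
    · have h1 := le_max_left (x₀ i - ρ) (a i + δ * (j i : ℕ))
      have h2 := min_le_left (x₀ i + ρ) (a i + δ * ((j i : ℕ) + 1))
      linarith
    · rintro x ⟨hxB, hxc⟩
      have hBc := hBcoord x hxB
      have hcc := (hcell_mem x j).1 hxc
      constructor
      · intro i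
        show max (x₀ i - ρ) (a i + δ * (j i : ℕ)) ≤ x i
        exact max_le (hBc i).1 (hcc i).1
      · intro i
        show x i ≤ min (x₀ i + ρ) (a i + δ * ((j i : ℕ) + 1))
        exact le_min (hBc i).2 (le_of_lt (hcc i).2)
    · intro x hx
      have hx' : ∀ i, max (x₀ i - ρ) (a i + δ * (j i : ℕ)) < x i ∧
          x i < min (x₀ i + ρ) (a i + δ * ((j i : ℕ) + 1)) := fun i => hx i (Set.mem_univ i)
      constructor
      · rw [hBbox]
        constructor
        · intro i
          exact le_of_lt (lt_of_le_of_lt (le_max_left _ _) (hx' i).1)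
        · intro i
          exact le_of_lt (lt_of_lt_of_le (hx' i).2 (min_le_left _ _))
      · rw [hcell_mem]
        intro i
        exact ⟨le_of_lt (lt_of_le_of_lt (le_max_right _ _) (hx' i).1),
          lt_of_lt_of_le (hx' i).2 (min_le_right _ _)⟩
  -- decomposition of B
  have hBunion : B = ⋃ j ∈ J, (B ∩ cell j) := by
    apply Set.Subset.antisymm
    · intro x hx
      obtain ⟨j, hjJ, hjx⟩ := hJmem x hx
      exact Set.mem_biUnion hjJ ⟨hx, hjx⟩
    · intro x hx
      simp only [Set.mem_iUnion] at hx
      obtain ⟨j, _, hj⟩ := hx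
      exact hj.1
  have hpairwise : (↑J : Set (Fin d → Fin K)).PairwiseDisjoint (fun j => B ∩ cell j) :=
    fun j _ j' _ hne =>
      (hdisj_cell j j' hne).mono Set.inter_subset_right Set.inter_subset_right
  have hsumB : ∑ j ∈ J, (μ (B ∩ cell j)).toReal = (μ B).toReal := by
    have h1 : μ (⋃ j ∈ J, (B ∩ cell j)) = ∑ j ∈ J, μ (B ∩ cell j) :=
      measure_biUnion_finset hpairwise fun j _ => hBmeas.inter (hcell_meas j)
    rw [← hBunion] at h1
    rw [← ENNReal.toReal_sum (fun j _ => hμtop _), ← h1]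
  -- the target G sets
  set Gp : (Fin d → Fin K) → Set (Fin d → ℝ) := fun j =>
    hyperRect (f (z j)) ((ll (z j) + 2*p*δ*W) • r) ∩ unitCube d with hGpdef
  set Gm : (Fin d → Fin K) → Set (Fin d → ℝ) := fun j =>
    hyperRect (f (z j)) ((ll (z j) - 2*p*δ*W) • r) ∩ unitCube d with hGmdef
  have hGpmeas : ∀ j, MeasurableSet (Gp j) := fun j => (hrect_meas _ _).inter hcube_meas
  have hGmmeas : ∀ j, MeasurableSet (Gm j) := fun j => (hrect_meas _ _).inter hcube_meas
  have hpδrW : ∀ i, p * δ ≤ (p*δ*W) * r i := by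
    intro i
    have hpd : 0 < p * δ * W := mul_pos (mul_pos hp hδ0) hW0
    calc p * δ = (p*δ*W) * W⁻¹ := by field_simp
      _ ≤ (p*δ*W) * r i := mul_le_mul_of_nonneg_left (hrW i) hpd.le
  -- upper inclusion
  have hEh_subset : ∀ j ∈ J, (B ∩ cell j) ∩ Eh ⊆ (B ∩ cell j) ∩ T^[n] ⁻¹' (Gp j) := by
    intro j hj x hx
    obtain ⟨⟨hxB, hxc⟩, hxE⟩ := hx
    obtain ⟨hzB, hzc⟩ := hzmem j hj
    refine ⟨⟨hxB, hxc⟩, ?_⟩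
    have hTn_cube : T^[n] x ∈ unitCube d := (hTmaps.iterate n) (hB hxB)
    have hfc : ∀ i, |f x i - f (z j) i| ≤ p * δ := hfclose j x hxc (z j) hzc
    have hfc' : ∀ i, |f (z j) i - f x i| ≤ p * δ := fun i => by
      rw [abs_sub_comm]; exact hfc i
    have hstep1 : ll x ≤ ll (z j) + p*δ*W := by
      apply hlle x _ (by nlinarith [hl0 (z j), mul_pos (mul_pos hp hδ0) hW0])
      have hsub := hshift (f (z j)) (f x) (ll (z j)) (ll (z j) + p*δ*W) (fun i => by
        calc |f (z j) i - f x i| ≤ p * δ := hfc' i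
          _ ≤ (p*δ*W) * r i := hpδrW i
          _ = (ll (z j) + p*δ*W - ll (z j)) * r i := by ring)
      have hle := ENNReal.toReal_mono (hμtop _) (measure_mono hsub)
      calc c = (μ (hyperRect (f (z j)) (ll (z j) • r))).toReal := (hleq (z j)).symm
        _ ≤ _ := hle
    have hsub2 : hyperRect (f x) (ll x • r) ⊆
        hyperRect (f (z j)) ((ll (z j) + 2*p*δ*W) • r) := by
      apply hshift
      intro i
      calc |f x i - f (z j) i| ≤ p*δ := hfc i
        _ ≤ (p*δ*W) * r i := hpδrW i
        _ ≤ (ll (z j) + 2*p*δ*W - ll x) * r i := by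
          apply mul_le_mul_of_nonneg_right _ (hr0 i)
          linarith [hstep1]
    exact ⟨hsub2 hxE.2, hTn_cube⟩
  -- lower inclusion
  have hEh_supset : ∀ j ∈ J,
      (B ∩ cell j) ∩ T^[n] ⁻¹' (Gm j) ⊆ (B ∩ Eh) ∩ cell j := by
    intro j hj x hx
    obtain ⟨⟨hxB, hxc⟩, hxT⟩ := hx
    obtain ⟨hzB, hzc⟩ := hzmem j hj
    have hfc : ∀ i, |f x i - f (z j) i| ≤ p * δ := hfclose j x hxc (z j) hzc
    have hfc' : ∀ i, |f (z j) i - f x i| ≤ p * δ := fun i => by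
      rw [abs_sub_comm]; exact hfc i
    have hstep1' : ll (z j) - p*δ*W ≤ ll x := by
      by_cases hcase : 0 ≤ ll (z j) - p*δ*W
      · apply hlge x _
        have hsub := hshift (f x) (f (z j)) (ll (z j) - p*δ*W) (ll (z j)) (fun i => by
          calc |f x i - f (z j) i| ≤ p * δ := hfc i
            _ ≤ (p*δ*W) * r i := hpδrW i
            _ = (ll (z j) - (ll (z j) - p*δ*W)) * r i := by ring)
        have hle := ENNReal.toReal_mono (hμtop _) (measure_mono hsub)
        calc (μ (hyperRect (f x) ((ll (z j) - p*δ*W) • r))).toReal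
            ≤ (μ (hyperRect (f (z j)) (ll (z j) • r))).toReal := hle
          _ = c := hleq (z j)
      · push_neg at hcase
        linarith [hl0 x]
    have hsub2 : hyperRect (f (z j)) ((ll (z j) - 2*p*δ*W) • r) ⊆
        hyperRect (f x) (ll x • r) := by
      apply hshift
      intro i
      calc |f (z j) i - f x i| ≤ p*δ := hfc' i
        _ ≤ (p*δ*W) * r i := hpδrW i
        _ ≤ (ll x - (ll (z j) - 2*p*δ*W)) * r i := by
          apply mul_le_mul_of_nonneg_right _ (hr0 i)
          have hpd : 0 < p * δ * W := mul_pos (mul_pos hp hδ0) hW0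
          linarith [hstep1']
    exact ⟨⟨hxB, ⟨hB hxB, hsub2 hxT.1⟩⟩, hxc⟩
  -- mixing, upper form
  have hmix_up : ∀ j ∈ J, (μ ((B ∩ cell j) ∩ T^[n] ⁻¹' (Gp j))).toReal ≤
      (μ (B ∩ cell j)).toReal * (c + η) + E := by
    intro j hj
    have hmm := hmixn (B ∩ cell j) (Gp j) (hBmeas.inter (hcell_meas j)) (hGpmeas j)
      (hFcont j) (hGcont _ _)
    have habs := (abs_le.1 hmm).2
    have hG1 : (μ (Gp j)).toReal ≤ 1 := hμ1 _
    have hGle : (μ (Gp j)).toReal ≤ c + η := hGp_le (z j) (hB (hzmem j hj).1)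
    have hF0 : 0 ≤ (μ (B ∩ cell j)).toReal := ENNReal.toReal_nonneg
    have h2 : (μ (B ∩ cell j)).toReal * (μ (Gp j)).toReal ≤
        (μ (B ∩ cell j)).toReal * (c + η) := mul_le_mul_of_nonneg_left hGle hF0
    have h3 : (μ (Gp j)).toReal * E ≤ 1 * E :=
      mul_le_mul_of_nonneg_right hG1 hE
    linarith
  -- mixing, lower form
  have hmix_down : ∀ j ∈ J, (μ (B ∩ cell j)).toReal * (c - η) - E ≤
      (μ ((B ∩ cell j) ∩ T^[n] ⁻¹' (Gm j))).toReal := by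
    intro j hj
    have hmm := hmixn (B ∩ cell j) (Gm j) (hBmeas.inter (hcell_meas j)) (hGmmeas j)
      (hFcont j) (hGcont _ _)
    have habs := (abs_le.1 hmm).1
    have hG1 : (μ (Gm j)).toReal ≤ 1 := hμ1 _
    have hGge : c - η ≤ (μ (Gm j)).toReal := hGm_ge (z j) (hB (hzmem j hj).1)
    have hF0 : 0 ≤ (μ (B ∩ cell j)).toReal := ENNReal.toReal_nonneg
    have h2 : (μ (B ∩ cell j)).toReal * (c - η) ≤
        (μ (B ∩ cell j)).toReal * (μ (Gm j)).toReal := mul_le_mul_of_nonneg_left hGge hF0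
    have h3 : (μ (Gm j)).toReal * E ≤ 1 * E :=
      mul_le_mul_of_nonneg_right hG1 hE
    linarith
  have hμB0 : 0 ≤ (μ B).toReal := ENNReal.toReal_nonneg
  have hKE4 : (K:ℝ)^d * E ≤ c * (μ B).toReal / 4 := by
    linarith [hKE]
  have hJE : (J.card : ℝ) * E ≤ c * (μ B).toReal / 4 :=
    le_trans (mul_le_mul_of_nonneg_right hcardJ hE) hKE4
  have hμBη : (μ B).toReal * η ≤ (μ B).toReal * (c/4) :=
    mul_le_mul_of_nonneg_left hηc4 hμB0
  constructor
  · -- lower bound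
    have hmeasD : ∀ j ∈ J, MeasurableSet ((B ∩ cell j) ∩ T^[n] ⁻¹' (Gm j)) := fun j _ =>
      (hBmeas.inter (hcell_meas j)).inter ((hGmmeas j).preimage (hmeasT.iterate n))
    have hdisjD : (↑J : Set (Fin d → Fin K)).PairwiseDisjoint
        (fun j => (B ∩ cell j) ∩ T^[n] ⁻¹' (Gm j)) :=
      fun j _ j' _ hne => (hdisj_cell j j' hne).mono
        (Set.inter_subset_left.trans Set.inter_subset_right)
        (Set.inter_subset_left.trans Set.inter_subset_right)
    have h1 : ∑ j ∈ J, μ ((B ∩ cell j) ∩ T^[n] ⁻¹' (Gm j)) =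
        μ (⋃ j ∈ J, ((B ∩ cell j) ∩ T^[n] ⁻¹' (Gm j))) :=
      (measure_biUnion_finset hdisjD hmeasD).symm
    have hsub : (⋃ j ∈ J, ((B ∩ cell j) ∩ T^[n] ⁻¹' (Gm j))) ⊆ B ∩ Eh := by
      intro x hx
      simp only [Set.mem_iUnion] at hx
      obtain ⟨j, hj, hx⟩ := hx
      exact (hEh_supset j hj hx).1
    have h2 : ∑ j ∈ J, (μ ((B ∩ cell j) ∩ T^[n] ⁻¹' (Gm j))).toReal ≤
        (μ (B ∩ Eh)).toReal := by
      rw [← ENNReal.toReal_sum (fun j _ => hμtop _), h1]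
      exact ENNReal.toReal_mono (hμtop _) (measure_mono hsub)
    have h3 : ∑ j ∈ J, ((μ (B ∩ cell j)).toReal * (c - η) - E) ≤
        ∑ j ∈ J, (μ ((B ∩ cell j) ∩ T^[n] ⁻¹' (Gm j))).toReal :=
      Finset.sum_le_sum hmix_down
    have h4 : ∑ j ∈ J, ((μ (B ∩ cell j)).toReal * (c - η) - E) =
        (μ B).toReal * (c - η) - J.card * E := by
      rw [Finset.sum_sub_distrib, Finset.sum_const, ← Finset.sum_mul, hsumB, nsmul_eq_mul]
    rw [h4] at h3
    nlinarith [h2, h3, hJE, hμBη, mul_nonneg hμB0 hc0.le]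
  · -- upper bound
    have hsub : B ∩ Eh ⊆ ⋃ j ∈ J, ((B ∩ cell j) ∩ T^[n] ⁻¹' (Gp j)) := by
      intro x hx
      obtain ⟨j, hjJ, hjx⟩ := hJmem x hx.1
      exact Set.mem_biUnion hjJ (hEh_subset j hjJ ⟨⟨hx.1, hjx⟩, hx.2⟩)
    have h1 : μ (B ∩ Eh) ≤ ∑ j ∈ J, μ ((B ∩ cell j) ∩ T^[n] ⁻¹' (Gp j)) :=
      le_trans (measure_mono hsub) (measure_biUnion_finset_le J _)
    have hne : ∑ j ∈ J, μ ((B ∩ cell j) ∩ T^[n] ⁻¹' (Gp j)) ≠ ⊤ := by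
      rw [← lt_top_iff_ne_top]
      exact ENNReal.sum_lt_top.2 fun j _ => lt_of_le_of_ne le_top (hμtop _)
    have h2 : (μ (B ∩ Eh)).toReal ≤
        ∑ j ∈ J, (μ ((B ∩ cell j) ∩ T^[n] ⁻¹' (Gp j))).toReal := by
      rw [← ENNReal.toReal_sum (fun j _ => hμtop _)]
      exact ENNReal.toReal_mono hne h1
    have h3 : ∑ j ∈ J, (μ ((B ∩ cell j) ∩ T^[n] ⁻¹' (Gp j))).toReal ≤
        ∑ j ∈ J, ((μ (B ∩ cell j)).toReal * (c + η) + E) :=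
      Finset.sum_le_sum hmix_up
    have h4 : ∑ j ∈ J, ((μ (B ∩ cell j)).toReal * (c + η) + E) =
        (μ B).toReal * (c + η) + J.card * E := by
      rw [Finset.sum_add_distrib, Finset.sum_const, ← Finset.sum_mul, hsumB, nsmul_eq_mul]
    rw [h4] at h3
    nlinarith [h2, h3, hJE, hμBη, mul_nonneg hμB0 hc0.le]

/-- Lemma 3.7: two-sided estimate of `μ(B ∩ Ê_n)` for large `n`. -/
theorem stmt12 {d : ℕ} (hd : 0 < d)
    (T f : (Fin d → ℝ) → (Fin d → ℝ)) (μ : Measure (Fin d → ℝ))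
    [IsProbabilityMeasure μ] (hμcube : μ (unitCube d) = 1)
    (hT : IsPiecewiseExpanding d T)
    (hinv : MeasurePreserving T μ μ)
    (hmix : ExpMixing d T μ)
    (h : (Fin d → ℝ) → ℝ) (hh0 : ∀ x, 0 ≤ h x)
    (hdens : μ = volume.withDensity fun x => ENNReal.ofReal (h x))
    (q : ℝ) (hq : 1 < q) (hLq : MemLp h (ENNReal.ofReal q) volume)
    (p : ℝ) (hp : 0 < p) (hfl : ∀ x y, ‖f x - f y‖ ≤ p * ‖x - y‖)
    (hfmaps : Set.MapsTo f (unitCube d) (unitCube d))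
    (r : ℕ → Fin d → ℝ) (hr0 : ∀ n i, 0 ≤ r n i)
    (hrlim : Filter.Tendsto (fun n => ‖r n‖) Filter.atTop (nhds 0))
    (hrlb : ∀ n, r n ≠ 0 → ∀ i, (((n : ℝ)) ^ 2)⁻¹ < r n i)
    (l : ℕ → (Fin d → ℝ) → ℝ) (hl0 : ∀ n x, 0 ≤ l n x)
    (hleq : ∀ n, r n ≠ 0 → ∀ x,
        (μ (hyperRect (f x) (l n x • r n))).toReal = ∏ i, r n i)
    (hllt : ∀ n, r n ≠ 0 → ∀ x, ∀ s : ℝ, 0 ≤ s → s < l n x →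
        (μ (hyperRect (f x) (s • r n))).toReal < ∏ i, r n i)
    (hlgt : ∀ n, r n ≠ 0 → ∀ x, ∀ s : ℝ, l n x < s →
        (∏ i, r n i) < (μ (hyperRect (f x) (s • r n))).toReal)
    (x₀ : Fin d → ℝ) (ρ : ℝ) (hρ : 0 < ρ)
    (hB : Metric.closedBall x₀ ρ ⊆ unitCube d) :
    ∃ N : ℕ, ∀ n, N ≤ n →
      (1 / 2) * (μ (Metric.closedBall x₀ ρ)).toReal * ∏ i, r n i
          ≤ (μ (Metric.closedBall x₀ ρ ∩ Ehat d T f r l n)).toReal ∧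
      (μ (Metric.closedBall x₀ ρ ∩ Ehat d T f r l n)).toReal
          ≤ 2 * (μ (Metric.closedBall x₀ ρ)).toReal * ∏ i, r n i := by
  classical
  obtain ⟨L₀, K₀, hTfull⟩ := hT
  have hmeasT : Measurable T := hinv.measurable
  have hTmaps := hTfull.1
  set B := Metric.closedBall x₀ ρ with hBdef
  have hprod0 : ∀ n, r n = 0 → ∏ i, r n i = 0 := by
    intro n hrn
    exact Finset.prod_eq_zero (Finset.mem_univ (⟨0, hd⟩ : Fin d)) (by rw [hrn]; rfl)
  by_cases hμB : μ B = 0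
  · refine ⟨0, fun n _ => ?_⟩
    have hrs : μ (B ∩ Ehat d T f r l n) = 0 :=
      measure_mono_null Set.inter_subset_left hμB
    rw [hμB, hrs]
    simp
  have hμBpos : 0 < (μ B).toReal := ENNReal.toReal_pos hμB (measure_ne_top μ B)
  have hd0 : (0:ℝ) < d := by exact_mod_cast hd
  have hC₀ : (0:ℝ) < 3^d * (4*d) := by
    have h1 : (0:ℝ) < 3^d := by positivity
    nlinarith
  obtain ⟨c₀, hc₀, τ, hτ, hmix'⟩ := hmix ((3:ℝ)^d * (4*d)) hC₀
  set σ := τ / (2*(d:ℝ)) with hσdef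
  have hσ0 : 0 < σ := div_pos hτ (by linarith)
  have hq0 : (0:ℝ) < q := lt_trans zero_lt_one hq
  have he0 : 0 < 1 - 1/q := by
    have : 1/q < 1 := by rw [div_lt_one hq0]; exact hq
    linarith
  have he1 : 1 - 1/q ≤ 1 := by
    have : 0 ≤ 1/q := by positivity
    linarith
  set Hr := (eLpNorm h (ENNReal.ofReal q) volume).toReal with hHrdef
  have hHr0 : 0 ≤ Hr := ENNReal.toReal_nonneg
  have hkey : ∀ (m : ℕ) (b : ℝ), 0 < b →
      Tendsto (fun n : ℕ => (n:ℝ)^m * Real.exp (-b*n)) atTop (nhds 0) := by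
    intro m b hb
    have h1 := tendsto_rpow_mul_exp_neg_mul_atTop_nhds_zero (m:ℝ) b hb
    have h2 := h1.comp (tendsto_natCast_atTop_atTop (R := ℝ))
    refine h2.congr fun n => ?_
    simp [Function.comp, Real.rpow_natCast]
  -- condition 1 : shell error bound
  have hcnd1 : ∀ᶠ n : ℕ in atTop,
      Hr * ((2*(1+2*p)*(n:ℝ)^2)^d * (4*p*(d:ℝ)*(Real.exp (-σ*(n:ℝ)) * (n:ℝ)^2)))^(1-1/q)
        * (n:ℝ)^(2*d) < 1/4 := by
    apply Filter.Tendsto.eventually_lt_const (by norm_num : (0:ℝ) < 1/4)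
    set C₁ := (2*(1+2*p))^d * (4*p*(d:ℝ)) with hC₁def
    have hC₁0 : 0 ≤ C₁ := by
      apply mul_nonneg (pow_nonneg (by nlinarith [hp.le]) d)
      nlinarith [hp.le, hd0.le]
    apply squeeze_zero' (g := fun n : ℕ =>
        (Hr * C₁^(1-1/q)) * ((n:ℝ)^(4*d+2) * Real.exp (-(σ*(1-1/q))*(n:ℝ))))
    · apply Filter.Eventually.of_forall
      intro n
      have h1 : (0:ℝ) ≤ ((2*(1+2*p)*(n:ℝ)^2)^d *
          (4*p*(d:ℝ)*(Real.exp (-σ*(n:ℝ)) * (n:ℝ)^2)))^(1-1/q) := Real.rpow_nonneg (by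
        apply mul_nonneg (pow_nonneg (by nlinarith [hp.le, sq_nonneg (n:ℝ)]) d)
        exact mul_nonneg (mul_nonneg (mul_nonneg (by norm_num) hp.le) hd0.le)
          (mul_nonneg (Real.exp_nonneg _) (sq_nonneg _))) _
      positivity
    · filter_upwards [eventually_ge_atTop 1] with n hn1
      have hn1' : (1:ℝ) ≤ (n:ℝ) := by exact_mod_cast hn1
      have hn0 : (0:ℝ) ≤ (n:ℝ) := by linarith
      have hv0 : (0:ℝ) ≤ (n:ℝ)^(2*d+2) * Real.exp (-σ*(n:ℝ)) := by positivity
      have hinner : (2*(1+2*p)*(n:ℝ)^2)^d * (4*p*(d:ℝ)*(Real.exp (-σ*(n:ℝ)) * (n:ℝ)^2))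
          = C₁ * ((n:ℝ)^(2*d+2) * Real.exp (-σ*(n:ℝ))) := by
        have e1 : (2*(1+2*p)*(n:ℝ)^2)^d = (2*(1+2*p))^d * ((n:ℝ)^2)^d := mul_pow _ _ d
        have e2 : (n:ℝ)^(2*d+2) = ((n:ℝ)^2)^d * (n:ℝ)^2 := by rw [pow_add, pow_mul]
        rw [hC₁def, e1, e2]
        ring
      rw [hinner, Real.mul_rpow hC₁0 hv0,
        Real.mul_rpow (by positivity) (Real.exp_nonneg _)]
      have hb1 : ((n:ℝ)^(2*d+2))^(1-1/q) ≤ (n:ℝ)^(2*d+2) := by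
        calc ((n:ℝ)^(2*d+2))^(1-1/q) = (n:ℝ)^(((2*d+2:ℕ):ℝ)*(1-1/q)) := by
              rw [← Real.rpow_natCast (n:ℝ) (2*d+2), ← Real.rpow_mul hn0]
          _ ≤ (n:ℝ)^(((2*d+2:ℕ):ℝ)) := by
              apply Real.rpow_le_rpow_of_exponent_le hn1'
              have hk0 : (0:ℝ) ≤ ((2*d+2:ℕ):ℝ) := by positivity
              nlinarith [he0]
          _ = (n:ℝ)^(2*d+2) := Real.rpow_natCast _ _
      have hb2 : (Real.exp (-σ*(n:ℝ)))^(1-1/q) = Real.exp (-(σ*(1-1/q))*(n:ℝ)) := by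
        rw [← Real.exp_mul]
        congr 1
        ring
      rw [hb2]
      have hexp0' : (0:ℝ) ≤ Real.exp (-(σ*(1-1/q))*(n:ℝ)) := Real.exp_nonneg _
      have hC₁e : (0:ℝ) ≤ C₁^(1-1/q) := Real.rpow_nonneg hC₁0 _
      calc Hr * (C₁^(1-1/q) * (((n:ℝ)^(2*d+2))^(1-1/q) * Real.exp (-(σ*(1-1/q))*(n:ℝ))))
            * (n:ℝ)^(2*d)
          ≤ Hr * (C₁^(1-1/q) * ((n:ℝ)^(2*d+2) * Real.exp (-(σ*(1-1/q))*(n:ℝ))))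
            * (n:ℝ)^(2*d) := by
            apply mul_le_mul_of_nonneg_right _ (by positivity)
            apply mul_le_mul_of_nonneg_left _ hHr0
            apply mul_le_mul_of_nonneg_left _ hC₁e
            exact mul_le_mul_of_nonneg_right hb1 hexp0'
        _ = (Hr * C₁^(1-1/q)) * ((n:ℝ)^(4*d+2) * Real.exp (-(σ*(1-1/q))*(n:ℝ))) := by
            ring
    · have := (hkey (4*d+2) (σ*(1-1/q)) (mul_pos hσ0 he0)).const_mul (Hr * C₁^(1-1/q))
      simpa using this
  -- condition 2 : mixing error bound
  have hcnd2 : ∀ᶠ n : ℕ in atTop,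
      ((⌈2*ρ/Real.exp (-σ*(n:ℝ))⌉₊ + 1 : ℕ):ℝ)^d * (c₀ * Real.exp (-τ*(n:ℝ)))
        * (n:ℝ)^(2*d) < (μ B).toReal/4 := by
    apply Filter.Tendsto.eventually_lt_const (by positivity)
    apply squeeze_zero' (g := fun n : ℕ =>
        ((2*ρ+2)^d * c₀) * ((n:ℝ)^(2*d) * Real.exp (-(τ/2)*(n:ℝ))))
    · apply Filter.Eventually.of_forall
      intro n
      have h1 : (0:ℝ) ≤ ((⌈2*ρ/Real.exp (-σ*(n:ℝ))⌉₊ + 1 : ℕ):ℝ)^d := by positivity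
      have h2 : (0:ℝ) ≤ c₀ * Real.exp (-τ*(n:ℝ)) :=
        mul_nonneg hc₀.le (Real.exp_nonneg _)
      positivity
    · filter_upwards [eventually_ge_atTop 1] with n hn1
      have hδpos : 0 < Real.exp (-σ*(n:ℝ)) := Real.exp_pos _
      have hKb : ((⌈2*ρ/Real.exp (-σ*(n:ℝ))⌉₊ + 1 : ℕ):ℝ) ≤ (2*ρ+2) * Real.exp (σ*(n:ℝ)) := by
        have h1 : (⌈2*ρ/Real.exp (-σ*(n:ℝ))⌉₊ : ℝ) < 2*ρ/Real.exp (-σ*(n:ℝ)) + 1 :=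
          Nat.ceil_lt_add_one (by positivity)
        have h2 : 2*ρ/Real.exp (-σ*(n:ℝ)) = 2*ρ * Real.exp (σ*(n:ℝ)) := by
          rw [show -σ*(n:ℝ) = -(σ*(n:ℝ)) by ring, Real.exp_neg]
          field_simp
        have h3 : (1:ℝ) ≤ Real.exp (σ*(n:ℝ)) :=
          Real.one_le_exp (by positivity)
        push_cast
        nlinarith [hρ.le]
      have hexp : (Real.exp (σ*(n:ℝ)))^d * Real.exp (-τ*(n:ℝ)) = Real.exp (-(τ/2)*(n:ℝ)) := by
        rw [← Real.exp_nat_mul, ← Real.exp_add]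
        congr 1
        have hdσ : (d:ℝ) * σ = τ/2 := by
          rw [hσdef]
          field_simp
        linear_combination (n:ℝ) * hdσ
      have hK0 : (0:ℝ) ≤ ((⌈2*ρ/Real.exp (-σ*(n:ℝ))⌉₊ + 1 : ℕ):ℝ) := by positivity
      calc ((⌈2*ρ/Real.exp (-σ*(n:ℝ))⌉₊ + 1 : ℕ):ℝ)^d * (c₀ * Real.exp (-τ*(n:ℝ)))
            * (n:ℝ)^(2*d)
          ≤ ((2*ρ+2) * Real.exp (σ*(n:ℝ)))^d * (c₀ * Real.exp (-τ*(n:ℝ))) * (n:ℝ)^(2*d) := by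
            apply mul_le_mul_of_nonneg_right _ (by positivity)
            apply mul_le_mul_of_nonneg_right _ (mul_nonneg hc₀.le (Real.exp_nonneg _))
            exact pow_le_pow_left₀ hK0 hKb d
        _ = (2*ρ+2)^d * ((Real.exp (σ*(n:ℝ)))^d * Real.exp (-τ*(n:ℝ))) * c₀ * (n:ℝ)^(2*d) := by
            rw [mul_pow]
            ring
        _ = ((2*ρ+2)^d * c₀) * ((n:ℝ)^(2*d) * Real.exp (-(τ/2)*(n:ℝ))) := by
            rw [hexp]
            ring
    · have := (hkey (2*d) (τ/2) (half_pos hτ)).const_mul ((2*ρ+2)^d * c₀)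
      simpa using this
  have hev1 : ∀ᶠ n : ℕ in atTop, ‖r n‖ < 1 := hrlim.eventually_lt_const one_pos
  obtain ⟨N, hN⟩ := Filter.eventually_atTop.1
    (((hcnd1.and hcnd2).and hev1).and (eventually_ge_atTop 1))
  refine ⟨N, fun n hn => ?_⟩
  obtain ⟨⟨⟨hc1n, hc2n⟩, hrn1⟩, hn1⟩ := hN n hn
  by_cases hrn : r n = 0
  · have h0 : ∏ i, r n i = 0 := hprod0 n hrn
    have hE : Ehat d T f r l n = ∅ := by rw [Ehat, if_pos hrn]
    rw [h0, hE]
    simp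
  · have hn1' : (1:ℝ) ≤ (n:ℝ) := by exact_mod_cast hn1
    have hW1 : (1:ℝ) ≤ (n:ℝ)^2 := by nlinarith
    have hδ0 : 0 < Real.exp (-σ*(n:ℝ)) := Real.exp_pos _
    have hδ1 : Real.exp (-σ*(n:ℝ)) ≤ 1 := by
      rw [Real.exp_le_one_iff]
      nlinarith [hσ0]
    have hKc : 2*ρ/Real.exp (-σ*(n:ℝ)) < ((⌈2*ρ/Real.exp (-σ*(n:ℝ))⌉₊ + 1 : ℕ):ℝ) := by
      push_cast
      linarith [Nat.le_ceil (2*ρ/Real.exp (-σ*(n:ℝ)))]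
    have hr1' : ∀ i, r n i ≤ 1 := by
      intro i
      have h1 : |r n i| ≤ ‖r n‖ := by
        rw [← Real.norm_eq_abs]
        exact norm_le_pi_norm (r n) i
      linarith [le_abs_self (r n i)]
    have hrW : ∀ i, ((n:ℝ)^2)⁻¹ ≤ r n i := fun i => (hrlb n hrn i).le
    have hnpos : (0:ℝ) < (n:ℝ)^(2*d) := by positivity
    have hprodlb : ((n:ℝ)^(2*d))⁻¹ ≤ ∏ i, r n i := by
      have h1 : ∏ _i : Fin d, (((n:ℝ)^2)⁻¹) ≤ ∏ i, r n i :=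
        Finset.prod_le_prod (fun i _ => by positivity) (fun i _ => hrW i)
      have h2 : ∏ _i : Fin d, (((n:ℝ)^2)⁻¹) = ((n:ℝ)^(2*d))⁻¹ := by
        rw [Finset.prod_const, Finset.card_univ, Fintype.card_fin, inv_pow, ← pow_mul]
      linarith [h1, h2.symm.le, h2.le]
    have hηcn : Hr * ((2*(1+2*p)*(n:ℝ)^2)^d *
        (4*p*(d:ℝ)*(Real.exp (-σ*(n:ℝ)) * (n:ℝ)^2)))^(1-1/q) ≤ (∏ i, r n i)/4 := by
      have hXn := mul_le_mul_of_nonneg_right hc1n.le (inv_nonneg.2 hnpos.le)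
      rw [mul_assoc, mul_inv_cancel₀ (ne_of_gt hnpos), mul_one] at hXn
      calc Hr * ((2*(1+2*p)*(n:ℝ)^2)^d *
            (4*p*(d:ℝ)*(Real.exp (-σ*(n:ℝ)) * (n:ℝ)^2)))^(1-1/q)
          ≤ 1/4 * ((n:ℝ)^(2*d))⁻¹ := hXn
        _ ≤ 1/4 * (∏ i, r n i) := by
            apply mul_le_mul_of_nonneg_left hprodlb
            norm_num
        _ = (∏ i, r n i)/4 := by ring
    have hKEn : ((⌈2*ρ/Real.exp (-σ*(n:ℝ))⌉₊ + 1 : ℕ):ℝ)^d * (c₀ * Real.exp (-τ*(n:ℝ)))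
        ≤ (∏ i, r n i) * (μ B).toReal / 4 := by
      have hYn := mul_le_mul_of_nonneg_right hc2n.le (inv_nonneg.2 hnpos.le)
      rw [mul_assoc, mul_inv_cancel₀ (ne_of_gt hnpos), mul_one] at hYn
      calc ((⌈2*ρ/Real.exp (-σ*(n:ℝ))⌉₊ + 1 : ℕ):ℝ)^d * (c₀ * Real.exp (-τ*(n:ℝ)))
          ≤ (μ B).toReal/4 * ((n:ℝ)^(2*d))⁻¹ := hYn
        _ ≤ (μ B).toReal/4 * (∏ i, r n i) := by
            apply mul_le_mul_of_nonneg_left hprodlb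
            positivity
        _ = (∏ i, r n i) * (μ B).toReal / 4 := by ring
    have hEh : Ehat d T f r l n = {x ∈ unitCube d | T^[n] x ∈ hyperRect (f x) (l n x • r n)} := by
      rw [Ehat, if_neg hrn]
    rw [hEh]
    exact key_estimate hd T f μ hμcube hmeasT hTmaps h hh0 hdens q hq hLq p hp hfl hfmaps
      (r n) (hr0 n) hr1' ((n:ℝ)^2) hW1 hrW (l n) (hl0 n) (hleq n hrn) (hllt n hrn) (hlgt n hrn)
      n (c₀ * Real.exp (-τ*(n:ℝ))) (mul_nonneg hc₀.le (Real.exp_nonneg _))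
      (fun F G hF hG h1 h2 => hmix' n hn1 F G hF hG h1 h2) x₀ ρ hρ hB
      (Real.exp (-σ*(n:ℝ))) hδ0 hδ1 (⌈2*ρ/Real.exp (-σ*(n:ℝ))⌉₊ + 1) hKc hηcn hKEn

end
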